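/- Let f₁, …, f_K : ℝ^D → ℝ be norms on ℝ^D with dual norms f₁^*, …, f_K^*, and let α₁, …, α_K > 0. Define the norm N(x) = Σ_{k=1}^K α_k f_k(x). Then the dual norm of N is N^*(y) = inf { max_{1≤k≤K} α_k^{−1} f_k^*(y_k) : y₁ + ⋯ + y_K = y }. -/

import Mathlib

open scoped BigOperators

/-- The dual norm (w.r.t. the Euclidean inner product) of a norm `f` on `ℝ^D`. -/
noncomputable def dualNorm {D : ℕ} (f : EuclideanSpace ℝ (Fin D) → ℝ)
    (y : EuclideanSpace ℝ (Fin D)) : ℝ :=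
  sSup {t : ℝ | ∃ x, f x ≤ 1 ∧ t = inner ℝ y x}

section Aux

variable {D : ℕ}

local notation "E" => EuclideanSpace ℝ (Fin D)

variable {f : EuclideanSpace ℝ (Fin D) → ℝ}

section Basic
variable (htri : ∀ a b, f (a + b) ≤ f a + f b)
  (hhom : ∀ (c : ℝ) a, f (c • a) = |c| * f a)
  (hdef : ∀ a, f a = 0 → a = 0)

include hhom in
lemma f_zero : f 0 = 0 := by
  have := hhom 0 0; simpa using this

include htri hhom in
lemma f_nonneg (a : E) : 0 ≤ f a := by
  have h := htri a (-a)
  have hneg : f (-a) = f a := by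
    have := hhom (-1) a; simpa using this
  have h0 : f 0 = 0 := f_zero hhom
  simp only [add_neg_cancel, h0, hneg] at h
  linarith

include htri hhom in
lemma f_sum_le {ι : Type*} (s : Finset ι) (g : ι → EuclideanSpace ℝ (Fin D)) :
    f (∑ i ∈ s, g i) ≤ ∑ i ∈ s, f (g i) := by
  classical
  induction s using Finset.cons_induction with
  | empty => simp [f_zero hhom]
  | cons i s hi ih =>
      rw [Finset.sum_cons, Finset.sum_cons]
      exact le_trans (htri _ _) (by linarith)

include htri hhom in
lemma f_upper : ∃ C : ℝ, 0 < C ∧ ∀ x : EuclideanSpace ℝ (Fin D), f x ≤ C * ‖x‖ := by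
  refine ⟨(∑ i, f (EuclideanSpace.single i (1:ℝ))) + 1, by
    have : 0 ≤ ∑ i, f (EuclideanSpace.single i (1:ℝ)) :=
      Finset.sum_nonneg fun i _ => f_nonneg htri hhom _
    linarith, fun x => ?_⟩
  have hx : x = ∑ i, x i • EuclideanSpace.single i (1:ℝ) := by
    ext j
    rw [WithLp.ofLp_sum, Finset.sum_apply]
    simp [EuclideanSpace.single_apply]
  have h1 : f x ≤ ∑ i, f (x i • EuclideanSpace.single i (1:ℝ)) := by
    nth_rewrite 1 [hx]; exact f_sum_le htri hhom _ _
  have h2 : ∀ i : Fin D, f (x i • EuclideanSpace.single i (1:ℝ)) ≤ ‖x‖ * f (EuclideanSpace.single i (1:ℝ)) := by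
    intro i
    rw [hhom]
    have habs : |x i| ≤ ‖x‖ := by
      have h3 : (inner ℝ (EuclideanSpace.single i (1:ℝ)) x : ℝ) = x i := by
        simp [EuclideanSpace.inner_single_left]
      have := abs_real_inner_le_norm (EuclideanSpace.single i (1:ℝ)) x
      rwa [h3, EuclideanSpace.norm_single, norm_one, one_mul] at this
    exact mul_le_mul_of_nonneg_right habs (f_nonneg htri hhom _)
  calc f x ≤ ∑ i, f (x i • EuclideanSpace.single i (1:ℝ)) := h1
    _ ≤ ∑ i, ‖x‖ * f (EuclideanSpace.single i (1:ℝ)) := Finset.sum_le_sum (fun i _ => h2 i)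
    _ = (∑ i, f (EuclideanSpace.single i (1:ℝ))) * ‖x‖ := by rw [← Finset.mul_sum, mul_comm]
    _ ≤ ((∑ i, f (EuclideanSpace.single i (1:ℝ))) + 1) * ‖x‖ := by
        have := norm_nonneg x; nlinarith

include htri hhom in
lemma f_cont : Continuous f := by
  obtain ⟨C, hC, hub⟩ := f_upper htri hhom
  have hlip : LipschitzWith (Real.toNNReal C) f := by
    rw [lipschitzWith_iff_dist_le_mul]
    intro a b
    have h1 : f a ≤ f (a - b) + f b := by
      have := htri (a - b) b; simpa using this
    have h2 : f b ≤ f (b - a) + f a := by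
      have := htri (b - a) a; simpa using this
    have h3 : f (b - a) = f (a - b) := by
      have := hhom (-1) (a - b)
      simp only [neg_smul, one_smul, abs_neg, abs_one, one_mul] at this
      rw [show b - a = -(a - b) by abel, this]
    have h4 : f (a - b) ≤ C * ‖a - b‖ := hub _
    rw [Real.dist_eq, dist_eq_norm, Real.coe_toNNReal C hC.le]
    rw [abs_le]
    have h5 : f (b - a) ≤ C * ‖a - b‖ := h3 ▸ h4
    exact ⟨by linarith, by linarith⟩
  exact hlip.continuous

include htri hhom hdef in
lemma f_lower : ∃ c : ℝ, 0 < c ∧ ∀ x : EuclideanSpace ℝ (Fin D), c * ‖x‖ ≤ f x := by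
  rcases subsingleton_or_nontrivial (EuclideanSpace ℝ (Fin D)) with hE | hE
  · refine ⟨1, one_pos, fun x => ?_⟩
    have : x = 0 := Subsingleton.elim x 0
    simp [this, f_zero hhom]
  · have hsp : (Metric.sphere (0:EuclideanSpace ℝ (Fin D)) 1).Nonempty :=
      NormedSpace.sphere_nonempty.mpr zero_le_one
    obtain ⟨x₀, hx₀, hmin⟩ := (isCompact_sphere (0:EuclideanSpace ℝ (Fin D)) 1).exists_isMinOn
      hsp ((f_cont htri hhom).continuousOn)
    have hx₀n : ‖x₀‖ = 1 := by simpa using hx₀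
    have hx₀0 : x₀ ≠ 0 := by intro h; rw [h] at hx₀n; simp at hx₀n
    have hc : 0 < f x₀ :=
      lt_of_le_of_ne (f_nonneg htri hhom x₀) fun h => hx₀0 (hdef _ h.symm)
    refine ⟨f x₀, hc, fun x => ?_⟩
    rcases eq_or_ne x 0 with rfl | hx
    · simp [f_zero hhom]
    · have hxn : 0 < ‖x‖ := norm_pos_iff.mpr hx
      have hu : (‖x‖⁻¹ • x) ∈ Metric.sphere (0:EuclideanSpace ℝ (Fin D)) 1 := by
        simp [norm_smul, abs_of_pos (inv_pos.mpr hxn), inv_mul_cancel₀ hxn.ne']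
      have hle : f x₀ ≤ f (‖x‖⁻¹ • x) := hmin hu
      rw [hhom, abs_of_pos (inv_pos.mpr hxn)] at hle
      have := mul_le_mul_of_nonneg_left hle hxn.le
      calc f x₀ * ‖x‖ = ‖x‖ * f x₀ := mul_comm _ _
        _ ≤ ‖x‖ * (‖x‖⁻¹ * f x) := this
        _ = f x := by field_simp

lemma dual_set_nonempty (hhom : ∀ (c : ℝ) a, f (c • a) = |c| * f a)
    (y : EuclideanSpace ℝ (Fin D)) :
    {t : ℝ | ∃ x, f x ≤ 1 ∧ t = inner ℝ y x}.Nonempty :=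
  ⟨0, 0, by simp [f_zero hhom], by simp⟩

include htri hhom hdef in
lemma dual_set_bdd (y : EuclideanSpace ℝ (Fin D)) :
    BddAbove {t : ℝ | ∃ x, f x ≤ 1 ∧ t = inner ℝ y x} := by
  obtain ⟨c, hc, hlb⟩ := f_lower htri hhom hdef
  refine ⟨‖y‖ * c⁻¹, ?_⟩
  rintro t ⟨x, hx, rfl⟩
  have h1 : ‖x‖ ≤ c⁻¹ := by
    have := hlb x
    rw [← le_div_iff₀' hc] at this
    calc ‖x‖ ≤ f x / c := this
      _ ≤ 1 / c := by gcongr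
      _ = c⁻¹ := one_div c
  calc (inner ℝ y x : ℝ) ≤ ‖y‖ * ‖x‖ := real_inner_le_norm y x
    _ ≤ ‖y‖ * c⁻¹ := mul_le_mul_of_nonneg_left h1 (norm_nonneg y)

include htri hhom hdef in
lemma dual_nonneg (y : EuclideanSpace ℝ (Fin D)) : 0 ≤ dualNorm f y :=
  le_csSup (dual_set_bdd htri hhom hdef y) ⟨0, by simp [f_zero hhom], by simp⟩

include htri hhom hdef in
lemma dual_le_of_mem {y x : EuclideanSpace ℝ (Fin D)} (hx : f x ≤ 1) :
    (inner ℝ y x : ℝ) ≤ dualNorm f y :=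
  le_csSup (dual_set_bdd htri hhom hdef y) ⟨x, hx, rfl⟩

include htri hhom hdef in
lemma dual_mul_ge (y x : EuclideanSpace ℝ (Fin D)) :
    (inner ℝ y x : ℝ) ≤ dualNorm f y * f x := by
  rcases (f_nonneg htri hhom x).eq_or_lt with h | h
  · have hx0 : x = 0 := hdef x h.symm
    simp [hx0, f_zero hhom]
  · have hx' : f ((f x)⁻¹ • x) ≤ 1 := by
      rw [hhom, abs_of_pos (inv_pos.mpr h), inv_mul_cancel₀ h.ne']
    have := dual_le_of_mem htri hhom hdef (y := y) hx'
    rw [real_inner_smul_right] at this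
    have := mul_le_mul_of_nonneg_left this h.le
    calc (inner ℝ y x : ℝ) = f x * ((f x)⁻¹ * inner ℝ y x) := by field_simp
      _ ≤ f x * dualNorm f y := this
      _ = dualNorm f y * f x := mul_comm _ _

include htri hhom hdef in
lemma dualBall_closed (r : ℝ) :
    IsClosed {z : EuclideanSpace ℝ (Fin D) | dualNorm f z ≤ r} := by
  have h : {z : EuclideanSpace ℝ (Fin D) | dualNorm f z ≤ r} =
      ⋂ x ∈ {x : EuclideanSpace ℝ (Fin D) | f x ≤ 1},
        {z : EuclideanSpace ℝ (Fin D) | (inner ℝ z x : ℝ) ≤ r} := by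
    ext z
    simp only [Set.mem_setOf_eq, Set.mem_iInter]
    constructor
    · intro h x hx
      exact le_trans (dual_le_of_mem htri hhom hdef hx) h
    · intro h
      refine csSup_le (dual_set_nonempty hhom z) ?_
      rintro t ⟨x, hx, rfl⟩
      exact h x hx
  rw [h]
  exact isClosed_biInter fun x hx =>
    isClosed_le (Continuous.inner continuous_id continuous_const) continuous_const

include htri hhom hdef in
lemma dualBall_compact (r : ℝ) :
    IsCompact {z : EuclideanSpace ℝ (Fin D) | dualNorm f z ≤ r} := by
  obtain ⟨C, hC, hub⟩ := f_upper htri hhom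
  have hb : ∀ z : EuclideanSpace ℝ (Fin D), dualNorm f z ≤ r → ‖z‖ ≤ C * r := by
    intro z hz
    rcases eq_or_ne z 0 with rfl | hz0
    · have h0 : (0:ℝ) ≤ r := le_trans (dual_nonneg htri hhom hdef 0) hz
      simpa using mul_nonneg hC.le h0
    · have hzn : 0 < ‖z‖ := norm_pos_iff.mpr hz0
      set x := (C * ‖z‖)⁻¹ • z with hxdef
      have hCz : 0 < C * ‖z‖ := mul_pos hC hzn
      have hfx : f x ≤ 1 := by
        rw [hxdef, hhom, abs_of_pos (inv_pos.mpr hCz)]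
        rw [inv_mul_le_iff₀ hCz, mul_one]
        exact hub z
      have hin : (inner ℝ z x : ℝ) = (C * ‖z‖)⁻¹ * ‖z‖ ^ 2 := by
        rw [hxdef, real_inner_smul_right, real_inner_self_eq_norm_sq]
      have := dual_le_of_mem htri hhom hdef (y := z) hfx
      rw [hin] at this
      have h2 : (C * ‖z‖)⁻¹ * ‖z‖ ^ 2 = ‖z‖ / C := by
        field_simp
      rw [h2, div_le_iff₀ hC] at this
      calc ‖z‖ ≤ dualNorm f z * C := this
        _ ≤ r * C := mul_le_mul_of_nonneg_right hz hC.le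
        _ = C * r := mul_comm _ _
  refine IsCompact.of_isClosed_subset (isCompact_closedBall (0:EuclideanSpace ℝ (Fin D)) (C*r))
    (dualBall_closed htri hhom hdef r) ?_
  intro z hz
  rw [Metric.mem_closedBall, dist_zero_right]
  exact hb z hz

include htri hhom hdef in
lemma dualBall_convex (r : ℝ) :
    Convex ℝ {z : EuclideanSpace ℝ (Fin D) | dualNorm f z ≤ r} := by
  intro z hz w hw a b ha hb hab
  simp only [Set.mem_setOf_eq] at hz hw ⊢
  refine csSup_le (dual_set_nonempty hhom _) ?_
  rintro t ⟨x, hx, rfl⟩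
  have h1 : (inner ℝ z x : ℝ) ≤ r := le_trans (dual_le_of_mem htri hhom hdef hx) hz
  have h2 : (inner ℝ w x : ℝ) ≤ r := le_trans (dual_le_of_mem htri hhom hdef hx) hw
  have : (inner ℝ (a • z + b • w) x : ℝ) = a * inner ℝ z x + b * inner ℝ w x := by
    rw [inner_add_left, real_inner_smul_left, real_inner_smul_left]
  rw [this]
  calc a * (inner ℝ z x : ℝ) + b * inner ℝ w x ≤ a * r + b * r := by
        have := mul_le_mul_of_nonneg_left h1 ha
        have := mul_le_mul_of_nonneg_left h2 hb
        linarith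
    _ = r := by rw [← add_mul, hab, one_mul]

include htri hhom hdef in
lemma dual_zero : dualNorm f (0 : EuclideanSpace ℝ (Fin D)) = 0 := by
  refine le_antisymm ?_ (dual_nonneg htri hhom hdef 0)
  refine csSup_le (dual_set_nonempty hhom 0) ?_
  rintro t ⟨x, hx, rfl⟩
  simp

include htri hhom hdef in
lemma f_norming (v : EuclideanSpace ℝ (Fin D)) :
    ∃ z : EuclideanSpace ℝ (Fin D), dualNorm f z ≤ 1 ∧ (inner ℝ z v : ℝ) = f v := by
  rcases eq_or_ne v 0 with rfl | hv
  · exact ⟨0, by rw [dual_zero htri hhom hdef]; norm_num, by simp [f_zero hhom]⟩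
  · set p := Submodule.span ℝ ({v} : Set (EuclideanSpace ℝ (Fin D))) with hp
    have hvp : v ∈ p := Submodule.mem_span_singleton_self v
    let e : ℝ ≃ₗ[ℝ] p := LinearEquiv.toSpanNonzeroSingleton ℝ _ v hv
    let φ : p →ₗ[ℝ] ℝ := (LinearMap.toSpanSingleton ℝ ℝ (f v)).comp e.symm.toLinearMap
    have hφ : ∀ x : p, φ x = (e.symm x) * f v := by
      intro x
      simp [φ, LinearMap.toSpanSingleton_apply, smul_eq_mul, mul_comm]
    have hcoe : ∀ x : p, (x : EuclideanSpace ℝ (Fin D)) = (e.symm x) • v :=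
      fun x => (LinearEquiv.coord_apply_smul ℝ _ v hv x).symm
    have hφle : ∀ x : p, φ x ≤ f x := by
      intro x
      rw [hφ x]
      have : f (x : EuclideanSpace ℝ (Fin D)) = |e.symm x| * f v := by
        rw [hcoe x, hhom]
      rw [this]
      exact mul_le_mul_of_nonneg_right (le_abs_self _) (f_nonneg htri hhom v)
    obtain ⟨g, hg1, hg2⟩ := exists_extension_of_le_sublinear ⟨p, φ⟩ f
      (fun c hc x => by rw [hhom, abs_of_pos hc])
      htri (fun x => hφle x)
    have hgv : g v = f v := by
      have h1 : e 1 = (⟨v, hvp⟩ : p) := LinearEquiv.toSpanNonzeroSingleton_one ℝ _ v hv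
      have h2 : e.symm (⟨v, hvp⟩ : p) = 1 := by rw [← h1, e.symm_apply_apply]
      have h3 := hg1 (⟨v, hvp⟩ : p)
      simp only [LinearPMap.mk_apply] at h3
      rw [show g v = g ((⟨v, hvp⟩ : p) : EuclideanSpace ℝ (Fin D)) from rfl, h3, hφ, h2,
        one_mul]
    have hgc : Continuous g := g.continuous_of_finiteDimensional
    obtain ⟨z, hz⟩ := (InnerProductSpace.toDual ℝ (EuclideanSpace ℝ (Fin D))).surjective
      ⟨g, hgc⟩
    have hzx : ∀ x, (inner ℝ z x : ℝ) = g x := by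
      intro x
      rw [← InnerProductSpace.toDual_apply_apply, hz]
      rfl
    refine ⟨z, ?_, ?_⟩
    · refine csSup_le (dual_set_nonempty hhom z) ?_
      rintro t ⟨x, hx, rfl⟩
      rw [hzx x]
      exact le_trans (hg2 x) hx
    · rw [hzx v, hgv]

end Basic
end Aux


/-- The dual norm of a weighted sum of norms `N(x) = Σ_k α_k f_k(x)` is the
infimal-max expression
`N^*(y) = inf { max_k α_k⁻¹ f_k^*(y_k) : y₁ + ⋯ + y_K = y }`. -/
theorem dualNorm_weighted_sum (D K : ℕ) (hK : 0 < K)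
    (f : Fin K → (EuclideanSpace ℝ (Fin D) → ℝ))
    (htri : ∀ k, ∀ a b, f k (a + b) ≤ f k a + f k b)
    (hhom : ∀ k, ∀ (c : ℝ) a, f k (c • a) = |c| * f k a)
    (hdef : ∀ k, ∀ a, f k a = 0 → a = 0)
    (α : Fin K → ℝ) (hα : ∀ k, 0 < α k)
    (y : EuclideanSpace ℝ (Fin D)) :
    dualNorm (fun x => ∑ k, α k * f k x) y =
      sInf {t : ℝ | ∃ ys : Fin K → EuclideanSpace ℝ (Fin D),
        (∑ k, ys k) = y ∧ t = ⨆ k, (α k)⁻¹ * dualNorm (f k) (ys k)} := by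
  classical
  haveI : Nonempty (Fin K) := ⟨⟨0, hK⟩⟩
  set k0 : Fin K := ⟨0, hK⟩ with hk0
  set N : EuclideanSpace ℝ (Fin D) → ℝ := fun x => ∑ k, α k * f k x with hN
  have fnonneg : ∀ k a, 0 ≤ f k a := fun k => f_nonneg (htri k) (hhom k)
  have Ntri : ∀ a b, N (a + b) ≤ N a + N b := by
    intro a b
    rw [hN]
    simp only
    rw [← Finset.sum_add_distrib]
    refine Finset.sum_le_sum fun k _ => ?_
    have := htri k a b
    nlinarith [(hα k).le]
  have Nhom : ∀ (c : ℝ) a, N (c • a) = |c| * N a := by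
    intro c a
    simp only [hN, Finset.mul_sum]
    exact Finset.sum_congr rfl fun k _ => by rw [hhom k]; ring
  have Ndef : ∀ a, N a = 0 → a = 0 := by
    intro a ha
    have hterm : ∀ k ∈ Finset.univ, α k * f k a = 0 :=
      (Finset.sum_eq_zero_iff_of_nonneg
        (fun k _ => mul_nonneg (hα k).le (fnonneg k a))).mp ha
    have h0 := hterm k0 (Finset.mem_univ _)
    rcases mul_eq_zero.mp h0 with h | h
    · exact absurd h (hα _).ne'
    · exact hdef _ _ h
  set S := {t : ℝ | ∃ ys : Fin K → EuclideanSpace ℝ (Fin D),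
      (∑ k, ys k) = y ∧ t = ⨆ k, (α k)⁻¹ * dualNorm (f k) (ys k)} with hS
  have hSne : S.Nonempty := by
    refine ⟨_, fun k => if k = k0 then y else 0, ?_, rfl⟩
    rw [Finset.sum_ite_eq' Finset.univ k0 (fun _ => y)]
    simp
  have hSbdd : BddBelow S := by
    refine ⟨0, ?_⟩
    rintro s ⟨ys, hsum, rfl⟩
    have hbr : BddAbove (Set.range fun k => (α k)⁻¹ * dualNorm (f k) (ys k)) :=
      (Set.finite_range _).bddAbove
    exact le_trans (mul_nonneg (inv_pos.mpr (hα k0)).le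
      (dual_nonneg (htri k0) (hhom k0) (hdef k0) _)) (le_ciSup hbr k0)
  apply le_antisymm
  · -- easy direction
    refine le_csInf hSne ?_
    rintro t' ⟨ys, hsum, rfl⟩
    set M := ⨆ k, (α k)⁻¹ * dualNorm (f k) (ys k) with hM
    have hbr : BddAbove (Set.range fun k => (α k)⁻¹ * dualNorm (f k) (ys k)) :=
      (Set.finite_range _).bddAbove
    have hMk : ∀ k, dualNorm (f k) (ys k) ≤ α k * M := by
      intro k
      have h1 : (α k)⁻¹ * dualNorm (f k) (ys k) ≤ M := le_ciSup hbr k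
      have h2 := mul_le_mul_of_nonneg_left h1 (hα k).le
      calc dualNorm (f k) (ys k) = α k * ((α k)⁻¹ * dualNorm (f k) (ys k)) := by
            rw [← mul_assoc, mul_inv_cancel₀ (hα k).ne', one_mul]
        _ ≤ α k * M := h2
    have hM0 : 0 ≤ M := le_trans (mul_nonneg (inv_pos.mpr (hα k0)).le
      (dual_nonneg (htri k0) (hhom k0) (hdef k0) _)) (le_ciSup hbr k0)
    refine csSup_le (dual_set_nonempty Nhom y) ?_
    rintro s ⟨x, hx, rfl⟩
    have hsplit : (inner ℝ y x : ℝ) = ∑ k, (inner ℝ (ys k) x : ℝ) := by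
      rw [← hsum, sum_inner]
    rw [hsplit]
    calc ∑ k, (inner ℝ (ys k) x : ℝ)
        ≤ ∑ k, dualNorm (f k) (ys k) * f k x :=
          Finset.sum_le_sum fun k _ => dual_mul_ge (htri k) (hhom k) (hdef k) _ _
      _ ≤ ∑ k, (α k * M) * f k x :=
          Finset.sum_le_sum fun k _ => mul_le_mul_of_nonneg_right (hMk k) (fnonneg k x)
      _ = M * N x := by
          rw [hN]; simp only; rw [Finset.mul_sum]
          exact Finset.sum_congr rfl fun k _ => by ring
      _ ≤ M * 1 := mul_le_mul_of_nonneg_left hx hM0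
      _ = M := mul_one M
  · -- hard direction
    set t := dualNorm N y with ht
    have t0 : 0 ≤ t := dual_nonneg Ntri Nhom Ndef y
    set ball : Fin K → Set (EuclideanSpace ℝ (Fin D)) :=
      fun k => {z | dualNorm (f k) z ≤ t * α k} with hball
    set Cset := (fun zs : Fin K → EuclideanSpace ℝ (Fin D) => ∑ k, zs k) ''
      (Set.univ.pi ball) with hCset
    have hCcompact : IsCompact Cset :=
      (isCompact_univ_pi fun k => dualBall_compact (htri k) (hhom k) (hdef k) _).image
        (continuous_finset_sum _ fun k _ => continuous_apply k)
    have hCclosed : IsClosed Cset := hCcompact.isClosed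
    have hCconvex : Convex ℝ Cset := by
      rintro z ⟨zs, hzs, rfl⟩ w ⟨ws, hws, rfl⟩ a b ha hb hab
      refine ⟨fun k => a • zs k + b • ws k, fun k _ => ?_, ?_⟩
      · exact dualBall_convex (htri k) (hhom k) (hdef k) _ (hzs k (Set.mem_univ k))
          (hws k (Set.mem_univ k)) ha hb hab
      · simp only
        rw [Finset.sum_add_distrib, ← Finset.smul_sum, ← Finset.smul_sum]
    have hyC : y ∈ Cset := by
      by_contra hy
      obtain ⟨G, u, hGC, hGy⟩ := geometric_hahn_banach_closed_point hCconvex hCclosed hy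
      obtain ⟨v, hv⟩ := (InnerProductSpace.toDual ℝ (EuclideanSpace ℝ (Fin D))).surjective G
      have hvx : ∀ x, (inner ℝ v x : ℝ) = G x := fun x => by
        rw [← InnerProductSpace.toDual_apply_apply, hv]
      choose w hw1 hw2 using fun k => f_norming (htri k) (hhom k) (hdef k) v
      set zs : Fin K → EuclideanSpace ℝ (Fin D) := fun k => (t * α k) • w k with hzs
      have hzball : ∀ k, zs k ∈ ball k := by
        intro k
        have htα : (0:ℝ) ≤ t * α k := mul_nonneg t0 (hα k).le
        refine csSup_le (dual_set_nonempty (hhom k) _) ?_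
        rintro s ⟨x, hx, rfl⟩
        have h1 : (inner ℝ (w k) x : ℝ) ≤ dualNorm (f k) (w k) :=
          dual_le_of_mem (htri k) (hhom k) (hdef k) hx
        have h2 : (inner ℝ (zs k) x : ℝ) = (t * α k) * inner ℝ (w k) x := by
          rw [hzs]; simp only; rw [real_inner_smul_left]
        rw [h2]
        calc (t * α k) * (inner ℝ (w k) x : ℝ)
            ≤ (t * α k) * dualNorm (f k) (w k) := mul_le_mul_of_nonneg_left h1 htα
          _ ≤ (t * α k) * 1 := mul_le_mul_of_nonneg_left (hw1 k) htα
          _ = t * α k := mul_one _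
      have haC : (∑ k, zs k) ∈ Cset := ⟨zs, fun k _ => hzball k, rfl⟩
      have hGa : G (∑ k, zs k) = t * N v := by
        rw [← hvx, inner_sum]
        have hterm : ∀ k : Fin K, (inner ℝ v (zs k) : ℝ) = t * (α k * f k v) := by
          intro k
          rw [hzs]; simp only
          rw [real_inner_smul_right, real_inner_comm, hw2 k]; ring
        rw [Finset.sum_congr rfl fun k _ => hterm k, ← Finset.mul_sum, hN]
      have hGy' : G y ≤ t * N v := by
        rw [← hvx, real_inner_comm]
        exact dual_mul_ge Ntri Nhom Ndef y v
      have h1 : G (∑ k, zs k) < u := hGC _ haC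
      rw [hGa] at h1
      linarith
    obtain ⟨zs, hzs, hsum⟩ := hyC
    have hel : (⨆ k, (α k)⁻¹ * dualNorm (f k) (zs k)) ∈ S := ⟨zs, hsum, rfl⟩
    have hle : (⨆ k, (α k)⁻¹ * dualNorm (f k) (zs k)) ≤ t := by
      refine ciSup_le fun k => ?_
      have h1 : dualNorm (f k) (zs k) ≤ t * α k := hzs k (Set.mem_univ k)
      have h2 := mul_le_mul_of_nonneg_left h1 (inv_pos.mpr (hα k)).le
      calc (α k)⁻¹ * dualNorm (f k) (zs k) ≤ (α k)⁻¹ * (t * α k) := h2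
        _ = t := by rw [mul_comm t (α k), ← mul_assoc, inv_mul_cancel₀ (hα k).ne', one_mul]
    exact le_trans (csInf_le hSbdd hel) hle
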